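/- Let b be a real number with 0 < b ≤ 1 and define f : ℝ → ℝ by f(r) = (2b/π) · arctan(π r / (2b)). Then for every r ≥ 0: (i) the derivative satisfies f'(r) = 1 / (1 + (π r/(2b))²), (ii) the second derivative satisfies f''(r) ≤ 0, and (iii) f'(r)² + f(r)² ≤ 1. -/

import Mathlib

open Real

theorem arctan_warping_properties (b : ℝ) (hb : 0 < b) (hb1 : b ≤ 1)
    (f : ℝ → ℝ) (hf : f = fun r => (2 * b / π) * arctan (π * r / (2 * b)))
    (r : ℝ) (hr : 0 ≤ r) :
    deriv f r = 1 / (1 + (π * r / (2 * b)) ^ 2) ∧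
    deriv (deriv f) r ≤ 0 ∧
    (deriv f r) ^ 2 + (f r) ^ 2 ≤ 1 := by
  have hπ := pi_pos
  set c : ℝ := π / (2 * b) with hc
  have hcpos : 0 < c := by positivity
  have hfc : f = fun r => c⁻¹ * arctan (c * r) := by
    rw [hf]; funext x
    rw [hc]
    field_simp
  -- derivative of f
  have hder : ∀ x : ℝ, HasDerivAt f (1 / (1 + (c * x) ^ 2)) x := by
    intro x
    have h1 : HasDerivAt (fun y : ℝ => c * y) c x := by
      simpa using (hasDerivAt_id x).const_mul c
    rw [hfc]
    have h3 := ((Real.hasDerivAt_arctan (c * x)).comp x h1).const_mul c⁻¹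
    refine h3.congr_deriv ?_
    rw [mul_comm _ c, ← mul_assoc, inv_mul_cancel₀ hcpos.ne', one_mul]
  have hderiv : deriv f = fun x => 1 / (1 + (c * x) ^ 2) := by
    funext x; exact (hder x).deriv
  have hpos : ∀ x : ℝ, (0:ℝ) < 1 + (c * x) ^ 2 := fun x => by positivity
  have hderivr : deriv f r = 1 / (1 + (π * r / (2 * b)) ^ 2) := by
    rw [hderiv]
    have : c * r = π * r / (2 * b) := by rw [hc]; ring
    show 1 / (1 + (c * r) ^ 2) = _
    rw [this]
  refine ⟨hderivr, ?_, ?_⟩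
  · -- second derivative
    have h1 : HasDerivAt (fun x : ℝ => 1 + (c * x) ^ 2) (2 * c ^ 2 * r) r := by
      have : HasDerivAt (fun x : ℝ => c * x) c r := by
        simpa using (hasDerivAt_id r).const_mul c
      have := (this.pow 2).const_add 1
      refine this.congr_deriv ?_
      rw [show (2:ℕ) - 1 = 1 from rfl]; push_cast; ring
    have h2 : HasDerivAt (fun x => 1 / (1 + (c * x) ^ 2))
        (-(2 * c ^ 2 * r) / (1 + (c * r) ^ 2) ^ 2) r := by
      simpa [one_div] using (h1.fun_inv (hpos r).ne')
    rw [hderiv]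
    rw [h2.deriv]
    have : (0:ℝ) ≤ 2 * c ^ 2 * r := by positivity
    apply div_nonpos_of_nonpos_of_nonneg <;> [linarith; positivity]
  · -- the inequality
    have hx : 0 ≤ c * r := by positivity
    set t := arctan (c * r) with ht
    have ht0 : 0 ≤ t := by have := arctan_strictMono.monotone hx; rwa [arctan_zero] at this
    have ht2 : t ≤ π / 2 := (arctan_lt_pi_div_two _).le
    have hcos : Real.cos t ^ 2 = 1 / (1 + (c * r) ^ 2) := cos_sq_arctan _
    have hfr : f r = c⁻¹ * t := by rw [hfc]
    have hsin : 2 / π * t ≤ Real.sin t := mul_le_sin ht0 ht2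
    have hcinv : c⁻¹ = 2 * b / π := by rw [hc]; field_simp
    rw [hderiv, hfr]
    show (1 / (1 + (c * r) ^ 2)) ^ 2 + (c⁻¹ * t) ^ 2 ≤ 1
    rw [← hcos, hcinv]
    have h1 : (2 * b / π * t) ^ 2 ≤ Real.sin t ^ 2 := by
      have hb2 : 2 * b / π * t ≤ 2 / π * t := by
        apply mul_le_mul_of_nonneg_right _ ht0
        gcongr
        linarith
      have h0 : 0 ≤ 2 * b / π * t := by positivity
      have hs : 0 ≤ Real.sin t := le_trans h0 (hb2.trans hsin)
      nlinarith [hb2.trans hsin]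
    have hc2 : Real.cos t ^ 2 ≤ 1 := cos_sq_le_one t
    have hs2 : Real.sin t ^ 2 = 1 - Real.cos t ^ 2 := sin_sq t
    nlinarith [sq_nonneg (Real.cos t)]
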